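/- Let F(t) = 1/(1+e^{-t}) denote the logistic function. Fix n, d, m ∈ ℕ, labeled data x_1,…,x_n ∈ ℝ^d with responses y_1,…,y_n ∈ ℝ, guidance instances z_1,…,z_m ∈ ℝ^d, interval endpoints a_1 < b_1, …, a_m < b_m in ℝ, and regularization parameters λ₁ ≥ 0, λ₂ ≥ 0. Then the Range-guidance objective J(w) = Σ_{i=1}^n (⟨x_i, w⟩ − y_i)² + λ₁‖w‖² − λ₂ Σ_{i=1}^m log( F(b_i − ⟨z_i, w⟩) − F(a_i − ⟨z_i, w⟩) ) is a convex function of w on ℝ^d. -/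

import Mathlib

open Real Set

lemma aux_convexOn_log_exp_add (c : ℝ) (hc : 0 < c) :
    ConvexOn ℝ Set.univ (fun s : ℝ => Real.log (Real.exp s + c)) := by
  have hpos : ∀ s : ℝ, 0 < Real.exp s + c := fun s => by positivity
  have hd : ∀ s : ℝ, HasDerivAt (fun s : ℝ => Real.log (Real.exp s + c))
      (Real.exp s / (Real.exp s + c)) s := fun s =>
    ((Real.hasDerivAt_exp s).add_const c).log (hpos s).ne'
  have hdiff : Differentiable ℝ (fun s : ℝ => Real.log (Real.exp s + c)) :=
    fun s => (hd s).differentiableAt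
  apply Monotone.convexOn_univ_of_deriv hdiff
  have hderiv : deriv (fun s : ℝ => Real.log (Real.exp s + c)) =
      fun s => Real.exp s / (Real.exp s + c) := funext fun s => (hd s).deriv
  rw [hderiv]
  intro s t hst
  rw [div_le_div_iff₀ (hpos s) (hpos t)]
  have h1 : Real.exp s ≤ Real.exp t := Real.exp_le_exp.2 hst
  nlinarith [Real.exp_pos s, Real.exp_pos t]

lemma aux_logistic_diff (A B : ℝ) (F : ℝ → ℝ)
    (hF : ∀ t, F t = 1 / (1 + Real.exp (-t))) (s : ℝ) :
    F (B - s) - F (A - s) =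
      Real.exp s * (Real.exp B - Real.exp A) /
        ((Real.exp s + Real.exp A) * (Real.exp s + Real.exp B)) := by
  rw [hF, hF, neg_sub, neg_sub, Real.exp_sub, Real.exp_sub]
  have hA := Real.exp_pos A
  have hB := Real.exp_pos B
  have hs := Real.exp_pos s
  have h1 : (1 : ℝ) + Real.exp s / Real.exp B ≠ 0 := by positivity
  have h2 : (1 : ℝ) + Real.exp s / Real.exp A ≠ 0 := by positivity
  field_simp
  ring

lemma aux_concaveOn_log_diff (A B : ℝ) (hAB : A < B) (F : ℝ → ℝ)
    (hF : ∀ t, F t = 1 / (1 + Real.exp (-t))) :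
    ConcaveOn ℝ Set.univ (fun s : ℝ => Real.log (F (B - s) - F (A - s))) := by
  have hBA : 0 < Real.exp B - Real.exp A := sub_pos.2 (Real.exp_lt_exp.2 hAB)
  have hEq : (fun s : ℝ => Real.log (F (B - s) - F (A - s))) =
      fun s : ℝ => s + Real.log (Real.exp B - Real.exp A)
        - Real.log (Real.exp s + Real.exp A) - Real.log (Real.exp s + Real.exp B) := by
    funext s
    have hsA : (0:ℝ) < Real.exp s + Real.exp A := by positivity
    have hsB : (0:ℝ) < Real.exp s + Real.exp B := by positivity
    rw [aux_logistic_diff A B F hF s, Real.log_div (by positivity) (by positivity),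
      Real.log_mul (Real.exp_ne_zero s) hBA.ne', Real.log_mul hsA.ne' hsB.ne',
      Real.log_exp]
    ring
  rw [hEq]
  have h1 := aux_convexOn_log_exp_add (Real.exp A) (Real.exp_pos A)
  have h2 := aux_convexOn_log_exp_add (Real.exp B) (Real.exp_pos B)
  have haff : ConcaveOn ℝ Set.univ
      (fun s : ℝ => s + Real.log (Real.exp B - Real.exp A)) :=
    (concaveOn_id convex_univ).add_const _
  exact (haff.sub h1).sub h2

lemma aux_convexOn_sum {E : Type*} [AddCommGroup E] [Module ℝ E] {ι : Type*} (s : Finset ι)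
    (f : ι → E → ℝ) (h : ∀ i ∈ s, ConvexOn ℝ Set.univ (f i)) :
    ConvexOn ℝ Set.univ (fun w => ∑ i ∈ s, f i w) := by
  classical
  induction s using Finset.cons_induction with
  | empty => simpa using convexOn_const (0 : ℝ) convex_univ
  | cons i s hi ih =>
    simp only [Finset.sum_cons]
    exact (h i (Finset.mem_cons_self _ _)).add (ih fun j hj => h j (Finset.mem_cons_of_mem hj))

lemma aux_concaveOn_sum {E : Type*} [AddCommGroup E] [Module ℝ E] {ι : Type*} (s : Finset ι)
    (f : ι → E → ℝ) (h : ∀ i ∈ s, ConcaveOn ℝ Set.univ (f i)) :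
    ConcaveOn ℝ Set.univ (fun w => ∑ i ∈ s, f i w) := by
  classical
  induction s using Finset.cons_induction with
  | empty => simpa using concaveOn_const (0 : ℝ) convex_univ
  | cons i s hi ih =>
    simp only [Finset.sum_cons]
    exact (h i (Finset.mem_cons_self _ _)).add (ih fun j hj => h j (Finset.mem_cons_of_mem hj))

lemma aux_normsq {E : Type*} [NormedAddCommGroup E] [NormedSpace ℝ E] :
    ConvexOn ℝ Set.univ (fun w : E => ‖w‖ ^ 2) := by
  refine ⟨convex_univ, fun p _ q _ c e hc he hce => ?_⟩
  have h := norm_add_le (c • p) (e • q)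
  rw [norm_smul, norm_smul, Real.norm_eq_abs, Real.norm_eq_abs,
    abs_of_nonneg hc, abs_of_nonneg he] at h
  have h0 := norm_nonneg (c • p + e • q)
  simp only [smul_eq_mul]
  nlinarith [norm_nonneg p, norm_nonneg q, sq_nonneg (‖p‖ - ‖q‖), mul_nonneg hc he]


open Real

/-- convexity of the Range-guidance objective. -/
theorem range_guidance_objective_convex
    (n d m : ℕ)
    (x : Fin n → EuclideanSpace ℝ (Fin d)) (y : Fin n → ℝ)
    (z : Fin m → EuclideanSpace ℝ (Fin d)) (a b : Fin m → ℝ)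
    (hab : ∀ i, a i < b i)
    (lam1 lam2 : ℝ) (hlam1 : 0 ≤ lam1) (hlam2 : 0 ≤ lam2)
    (F : ℝ → ℝ) (hF : ∀ t, F t = 1 / (1 + Real.exp (-t))) :
    ConvexOn ℝ Set.univ (fun w : EuclideanSpace ℝ (Fin d) =>
      (∑ i, ((inner ℝ (x i) w : ℝ) - y i) ^ 2) + lam1 * ‖w‖ ^ 2
        - lam2 * ∑ i, Real.log (F (b i - (inner ℝ (z i) w : ℝ))
            - F (a i - (inner ℝ (z i) w : ℝ)))) := by
  have hsq : ∀ i : Fin n, ConvexOn ℝ Set.univ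
      (fun w : EuclideanSpace ℝ (Fin d) => ((inner ℝ (x i) w : ℝ) - y i) ^ 2) := by
    intro i
    have hg := (Even.convexOn_pow (even_two (α := ℕ))).comp_affineMap
        ((innerSL ℝ (x i)).toLinearMap.toAffineMap + AffineMap.const ℝ (EuclideanSpace ℝ (Fin d)) (-(y i)))
    simpa [Function.comp_def, sub_eq_add_neg] using hg
  have hsum1 : ConvexOn ℝ Set.univ
      (fun w : EuclideanSpace ℝ (Fin d) => ∑ i, ((inner ℝ (x i) w : ℝ) - y i) ^ 2) :=
    aux_convexOn_sum Finset.univ _ (fun i _ => hsq i)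
  have hnorm : ConvexOn ℝ Set.univ (fun w : EuclideanSpace ℝ (Fin d) => lam1 * ‖w‖ ^ 2) := by
    have := (aux_normsq (E := EuclideanSpace ℝ (Fin d))).smul hlam1
    simpa [smul_eq_mul] using this
  have hlog : ∀ i : Fin m, ConcaveOn ℝ Set.univ
      (fun w : EuclideanSpace ℝ (Fin d) => Real.log (F (b i - (inner ℝ (z i) w : ℝ))
        - F (a i - (inner ℝ (z i) w : ℝ)))) := by
    intro i
    have hg := (aux_concaveOn_log_diff (a i) (b i) (hab i) F hF).comp_affineMap
        ((innerSL ℝ (z i)).toLinearMap.toAffineMap)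
    simpa [Function.comp_def] using hg
  have hsum2 : ConcaveOn ℝ Set.univ
      (fun w : EuclideanSpace ℝ (Fin d) => lam2 * ∑ i, Real.log (F (b i - (inner ℝ (z i) w : ℝ))
        - F (a i - (inner ℝ (z i) w : ℝ)))) := by
    have := (aux_concaveOn_sum Finset.univ _ (fun i _ => hlog i)).smul hlam2
    simpa [smul_eq_mul] using this
  exact (hsum1.add hnorm).sub hsum2
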